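/- Let a, b, s, t be positive integers with a < s ≤ t, and assume either s < b, or s = b = t. Then for every ε > 0 there exists n₀ such that for all n ≥ n₀: (1-ε)·C(s-1,a)·C(n,b) ≤ ex(n, K_{a,b}, K_{s,t}) ≤ (1+ε)·C(s-1,a)·C(n,b), where C(m,k) denotes the binomial coefficient. -/

import Mathlib

open SimpleGraph

/-- `F` is contained in `G` as a subgraph, i.e. there is an injective graph
homomorphism from `F` to `G`. -/
def ContainsCopy {α β : Type*} (F : SimpleGraph α) (G : SimpleGraph β) : Prop :=
  ∃ f : F →g G, Function.Injective f

/-- `N(H,G)`: the number of subgraphs of `G` isomorphic to `H`. -/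
noncomputable def copyCount {α β : Type*} (H : SimpleGraph α) (G : SimpleGraph β) : ℕ :=
  Nat.card {G' : G.Subgraph // Nonempty (H ≃g G'.coe)}

/-- `ex(n,H,F)`: the maximum number of copies of `H` in an `F`-free graph on `n` vertices. -/
noncomputable def exGen (n : ℕ) {α β : Type*} (H : SimpleGraph α) (F : SimpleGraph β) : ℕ :=
  sSup {m | ∃ G : SimpleGraph (Fin n), ¬ ContainsCopy F G ∧ m = copyCount H G}

/-- The complete bipartite graph `K_{a,b}`. -/
abbrev Kbip (a b : ℕ) : SimpleGraph (Fin a ⊕ Fin b) := completeBipartiteGraph (Fin a) (Fin b)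

/-- `K̄_{a,b}`: obtained from `K_{a,b}` by adding all edges inside the part of size `a`. -/
def KbipBar (a b : ℕ) : SimpleGraph (Fin a ⊕ Fin b) :=
  SimpleGraph.fromRel (fun u _ => u.isLeft)

/-- `k` vertex-disjoint copies of `G`. -/
def disjCopies (k : ℕ) {α : Type*} (G : SimpleGraph α) : SimpleGraph (Fin k × α) :=
  SimpleGraph.fromRel (fun u v => u.1 = v.1 ∧ G.Adj u.2 v.2)

/-- The vertex-disjoint union of `G` and `H`. -/
def disjSum {α β : Type*} (G : SimpleGraph α) (H : SimpleGraph β) : SimpleGraph (α ⊕ β) :=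
  SimpleGraph.fromRel (fun u v =>
    (∃ x y, u = Sum.inl x ∧ v = Sum.inl y ∧ G.Adj x y) ∨
    (∃ x y, u = Sum.inr x ∧ v = Sum.inr y ∧ H.Adj x y))

/-- Placing a graph `G0` on the `Fin b`-part of the vertex set `Fin a ⊕ Fin b`. -/
def liftRight (a : ℕ) {b : ℕ} (G0 : SimpleGraph (Fin b)) : SimpleGraph (Fin a ⊕ Fin b) :=
  SimpleGraph.fromRel (fun u v => ∃ x y, u = Sum.inr x ∧ v = Sum.inr y ∧ G0.Adj x y)

section Aux
open Finset
open scoped Classical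

/-- common neighborhood -/
noncomputable def cN {n : ℕ} (G : SimpleGraph (Fin n)) (S : Finset (Fin n)) : Finset (Fin n) :=
  Finset.univ.filter (fun x => ∀ y ∈ S, G.Adj y x)

lemma mem_cN {n : ℕ} {G : SimpleGraph (Fin n)} {S : Finset (Fin n)} {x : Fin n} :
    x ∈ cN G S ↔ ∀ y ∈ S, G.Adj y x := by simp [cN]

lemma cN_disjoint {n : ℕ} {G : SimpleGraph (Fin n)} {S : Finset (Fin n)} {x : Fin n}
    (hx : x ∈ cN G S) (hx' : x ∈ S) : False :=
  G.irrefl (mem_cN.1 hx x hx')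

/-- Kővári–Sós–Turán freeness consequence: every `s`-set has at most `t-1` common neighbors. -/
lemma card_cN_le {n s t : ℕ} {G : SimpleGraph (Fin n)}
    (hfree : ¬ ContainsCopy (Kbip s t) G) {S : Finset (Fin n)} (hS : S.card = s) :
    (cN G S).card ≤ t - 1 := by
  by_contra h
  have ht : t ≤ (cN G S).card := by omega
  obtain ⟨T, hTsub, hT⟩ := Finset.exists_subset_card_eq ht
  have eS : Fin s ≃ {x // x ∈ S} := (Finset.equivFinOfCardEq hS).symm
  have eT : Fin t ≃ {x // x ∈ T} := (Finset.equivFinOfCardEq hT).symm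
  refine hfree ⟨⟨Sum.elim (fun i => (eS i : Fin n)) (fun j => (eT j : Fin n)), ?_⟩, ?_⟩
  · rintro (i | i) (j | j) hadj <;>
      simp only [completeBipartiteGraph_adj, Sum.isLeft_inl, Sum.isRight_inl, Sum.isLeft_inr,
        Sum.isRight_inr, true_and, and_true, false_and, and_false, or_false, false_or] at hadj
    · exact absurd hadj (by simp)
    · exact mem_cN.1 (hTsub (eT j).2) _ (eS i).2
    · exact (mem_cN.1 (hTsub (eT i).2) _ (eS j).2).symm
    · exact absurd hadj (by simp)
  · have hST : ∀ (i : Fin s) (j : Fin t), (eS i : Fin n) ≠ (eT j : Fin n) := by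
      intro i j hEq
      exact cN_disjoint (hTsub (eT j).2) (hEq ▸ (eS i).2)
    rintro (i | i) (j | j) hEq
    · have := eS.injective (Subtype.ext hEq); simp [this]
    · exact absurd hEq (hST i j)
    · exact absurd hEq.symm (hST j i)
    · have := eT.injective (Subtype.ext hEq); simp [this]

lemma copy_spec {n a b : ℕ} {G : SimpleGraph (Fin n)} (G' : G.Subgraph)
    (h : Nonempty (Kbip a b ≃g G'.coe)) :
    ∃ A B : Finset (Fin n), A.card = a ∧ B.card = b ∧ (G'.verts = ↑A ∪ ↑B) ∧
      (∀ x y, G'.Adj x y ↔ ((x ∈ A ∧ y ∈ B) ∨ (y ∈ A ∧ x ∈ B))) := by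
  obtain ⟨e⟩ := h
  set fA : Fin a → Fin n := fun i => (e (Sum.inl i) : Fin n) with hfA
  set fB : Fin b → Fin n := fun j => (e (Sum.inr j) : Fin n) with hfB
  have hinjA : Function.Injective fA := fun i j hij => by
    have := e.injective (Subtype.ext hij); simpa using this
  have hinjB : Function.Injective fB := fun i j hij => by
    have := e.injective (Subtype.ext hij); simpa using this
  refine ⟨Finset.univ.image fA, Finset.univ.image fB,
    by rw [Finset.card_image_of_injective _ hinjA, Finset.card_univ, Fintype.card_fin],
    by rw [Finset.card_image_of_injective _ hinjB, Finset.card_univ, Fintype.card_fin], ?_, ?_⟩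
  · ext v
    simp only [Set.mem_union, Finset.coe_image, Set.mem_image, Finset.mem_coe, Finset.mem_image]
    constructor
    · intro hv
      rcases h' : e.symm ⟨v, hv⟩ with i | j
      · exact Or.inl ⟨i, by simp, by rw [hfA]; simp [← h']⟩
      · exact Or.inr ⟨j, by simp, by rw [hfB]; simp [← h']⟩
    · rintro (⟨i, -, rfl⟩ | ⟨j, -, rfl⟩)
      · exact (e (Sum.inl i)).2
      · exact (e (Sum.inr j)).2
  · intro x y
    constructor
    · intro hadj
      have hx : x ∈ G'.verts := G'.edge_vert hadj
      have hy : y ∈ G'.verts := G'.edge_vert hadj.symm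
      have hcoe : G'.coe.Adj ⟨x, hx⟩ ⟨y, hy⟩ := hadj
      have : (Kbip a b).Adj (e.symm ⟨x, hx⟩) (e.symm ⟨y, hy⟩) := e.symm.map_adj_iff.2 hcoe
      rcases h1 : e.symm ⟨x, hx⟩ with i | i <;> rcases h2 : e.symm ⟨y, hy⟩ with j | j <;>
        rw [h1, h2] at this <;>
        simp only [completeBipartiteGraph_adj, Sum.isLeft_inl, Sum.isRight_inl, Sum.isLeft_inr,
          Sum.isRight_inr, true_and, and_true, false_and, and_false, or_false, false_or,
          Bool.false_eq_true, or_self] at this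
      · exact Or.inl ⟨Finset.mem_image.2 ⟨i, Finset.mem_univ _,
            by show (↑(e (Sum.inl i)) : Fin n) = x; rw [← h1]; simp⟩,
          Finset.mem_image.2 ⟨j, Finset.mem_univ _,
            by show (↑(e (Sum.inr j)) : Fin n) = y; rw [← h2]; simp⟩⟩
      · exact Or.inr ⟨Finset.mem_image.2 ⟨j, Finset.mem_univ _,
            by show (↑(e (Sum.inl j)) : Fin n) = y; rw [← h2]; simp⟩,
          Finset.mem_image.2 ⟨i, Finset.mem_univ _,
            by show (↑(e (Sum.inr i)) : Fin n) = x; rw [← h1]; simp⟩⟩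
    · rintro (⟨hxA, hyB⟩ | ⟨hyA, hxB⟩)
      · obtain ⟨i, -, rfl⟩ := Finset.mem_image.1 hxA
        obtain ⟨j, -, rfl⟩ := Finset.mem_image.1 hyB
        exact e.map_adj_iff.2 (by simp [completeBipartiteGraph_adj])
      · obtain ⟨i, -, rfl⟩ := Finset.mem_image.1 hyA
        obtain ⟨j, -, rfl⟩ := Finset.mem_image.1 hxB
        exact (e.map_adj_iff.2 (by simp [completeBipartiteGraph_adj])).symm

instance {V : Type*} [Finite V] (G : SimpleGraph V) : Finite G.Subgraph :=
  Finite.of_injective (fun G' => (G'.verts, G'.Adj)) (by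
    rintro ⟨v1, a1, _, _⟩ ⟨v2, a2, _, _⟩ h
    simp only [Prod.mk.injEq] at h
    cases h.1; cases h.2; rfl)

section Upper
variable {n a b s t : ℕ} {G : SimpleGraph (Fin n)}

/-- the set of "complete bipartite pairs" -/
noncomputable def pairSet (n a b : ℕ) (G : SimpleGraph (Fin n)) :
    Finset (Finset (Fin n) × Finset (Fin n)) :=
  Finset.univ.filter (fun p => p.1.card = a ∧ p.2.card = b ∧ ∀ x ∈ p.1, ∀ y ∈ p.2, G.Adj x y)

lemma copyCount_le_pairSet : _root_.copyCount (Kbip a b) G ≤ (pairSet n a b G).card := by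
  have key : ∀ c : {G' : G.Subgraph // Nonempty (Kbip a b ≃g G'.coe)},
      ∃ p : Finset (Fin n) × Finset (Fin n), p ∈ pairSet n a b G ∧
        c.1.verts = ↑p.1 ∪ ↑p.2 ∧
        (∀ x y, c.1.Adj x y ↔ ((x ∈ p.1 ∧ y ∈ p.2) ∨ (y ∈ p.1 ∧ x ∈ p.2))) := by
    rintro ⟨G', hG'⟩
    obtain ⟨A, B, hA, hB, hverts, hadj⟩ := copy_spec G' hG'
    refine ⟨(A, B), ?_, hverts, hadj⟩
    simp only [pairSet, Finset.mem_filter, Finset.mem_univ, true_and]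
    exact ⟨hA, hB, fun x hx y hy => ((hadj x y).2 (Or.inl ⟨hx, hy⟩)).adj_sub⟩
  choose f hfmem hfverts hfadj using key
  have hcard : (pairSet n a b G).card =
      Nat.card {p : Finset (Fin n) × Finset (Fin n) // p ∈ pairSet n a b G} := by
    simp [Nat.card_eq_fintype_card, Fintype.card_coe]
  rw [_root_.copyCount, hcard]
  refine Nat.card_le_card_of_injective (fun c => ⟨f c, hfmem c⟩) ?_
  intro c1 c2 hEq
  simp only [Subtype.mk.injEq] at hEq
  ext1
  apply SimpleGraph.Subgraph.ext
  · rw [hfverts c1, hfverts c2, hEq]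
  · funext x y
    exact propext (((hfadj c1 x y).trans (by rw [hEq])).trans (hfadj c2 x y).symm)

lemma pairSet_card_le :
    (pairSet n a b G).card ≤ ∑ B ∈ (Finset.univ : Finset (Fin n)).powersetCard b,
      ((cN G B).card.choose a) := by
  have h := Finset.card_le_card_of_injOn
    (s := pairSet n a b G)
    (t := ((Finset.univ : Finset (Fin n)).powersetCard b).sigma
      (fun B => (cN G B).powersetCard a))
    (fun p => ⟨p.2, p.1⟩) ?_ ?_
  · rwa [Finset.card_sigma, Finset.sum_congr rfl
      (fun B _ => Finset.card_powersetCard a (cN G B))] at h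
  · intro p hp
    simp only [Finset.mem_coe, pairSet, Finset.mem_filter, Finset.mem_univ, true_and] at hp
    obtain ⟨hA, hB, hadj⟩ := hp
    simp only [Finset.mem_coe, Finset.mem_sigma, Finset.mem_powersetCard]
    exact ⟨⟨Finset.subset_univ _, hB⟩,
      ⟨fun x hx => mem_cN.2 (fun y hy => (hadj x hx y hy).symm), hA⟩⟩
  · intro p _ q _ h
    simp only [Sigma.mk.inj_iff, heq_eq_eq] at h
    exact Prod.ext h.2 h.1

lemma sum_choose_le (hfree : ¬ ContainsCopy (Kbip s t) G) (has : a < s) :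
    ∑ B ∈ (Finset.univ : Finset (Fin n)).powersetCard b, ((cN G B).card.choose a) ≤
      (n.choose b) * ((s-1).choose a) + (n.choose s) * (s.choose a) * ((t-1).choose b) := by
  rw [← Finset.sum_filter_add_sum_filter_not ((Finset.univ : Finset (Fin n)).powersetCard b)
    (fun B => (cN G B).card ≤ s - 1)]
  gcongr (?_ + ?_)
  · calc ∑ B ∈ _, ((cN G B).card.choose a)
        ≤ ∑ _B ∈ ((Finset.univ : Finset (Fin n)).powersetCard b).filter
            (fun B => (cN G B).card ≤ s - 1), ((s-1).choose a) := by
          refine Finset.sum_le_sum (fun B hB => ?_)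
          exact Nat.choose_le_choose a (Finset.mem_filter.1 hB).2
      _ ≤ (n.choose b) * ((s-1).choose a) := by
          rw [Finset.sum_const, smul_eq_mul]
          gcongr
          calc (((Finset.univ : Finset (Fin n)).powersetCard b).filter _).card
              ≤ ((Finset.univ : Finset (Fin n)).powersetCard b).card := Finset.card_filter_le _ _
            _ = n.choose b := by rw [Finset.card_powersetCard, Finset.card_univ, Fintype.card_fin]
  · -- bad part
    set bad := ((Finset.univ : Finset (Fin n)).powersetCard b).filter
      (fun B => ¬ (cN G B).card ≤ s - 1) with hbad
    have hsum : ∑ B ∈ bad, ((cN G B).card.choose a) =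
        (bad.sigma (fun B => (cN G B).powersetCard a)).card := by
      rw [Finset.card_sigma]
      exact (Finset.sum_congr rfl (fun B _ => (Finset.card_powersetCard a (cN G B)).symm))
    rw [hsum]
    set Q := ((Finset.univ : Finset (Fin n)).powersetCard s).sigma
      (fun S => (S.powersetCard a) ×ˢ ((cN G S).powersetCard b)) with hQ
    have hinj : (bad.sigma (fun B => (cN G B).powersetCard a)).card ≤ Q.card := by
      have hchoice : ∀ x : (Σ _B : Finset (Fin n), Finset (Fin n)),
          x ∈ bad.sigma (fun B => (cN G B).powersetCard a) →
          ∃ S : Finset (Fin n), x.2 ⊆ S ∧ S ⊆ cN G x.1 ∧ S.card = s := by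
        rintro ⟨B, A⟩ hx
        simp only [Finset.mem_sigma, hbad, Finset.mem_filter, Finset.mem_powersetCard] at hx
        obtain ⟨⟨⟨-, hBcard⟩, hBbad⟩, hAsub, hAcard⟩ := hx
        show ∃ S, A ⊆ S ∧ S ⊆ cN G B ∧ S.card = s
        exact Finset.exists_subsuperset_card_eq hAsub (by omega) (by omega)
      classical
      refine Finset.card_le_card_of_injOn
        (fun x => if h : x ∈ bad.sigma (fun B => (cN G B).powersetCard a) then
          ⟨(hchoice x h).choose, (x.2, x.1)⟩ else ⟨∅, (∅, ∅)⟩) ?_ ?_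
      · rintro ⟨B, A⟩ hx
        rw [Finset.mem_coe] at hx
        simp only [dif_pos hx]
        obtain ⟨hS1, hS2, hS3⟩ := (hchoice ⟨B, A⟩ hx).choose_spec
        simp only [Finset.mem_coe, Finset.mem_sigma, hbad, Finset.mem_filter, Finset.mem_powersetCard] at hx
        obtain ⟨⟨⟨-, hBcard⟩, hBbad⟩, hAsub, hAcard⟩ := hx
        simp only [Finset.mem_coe, hQ, Finset.mem_sigma, Finset.mem_powersetCard, Finset.mem_product]
        refine ⟨⟨Finset.subset_univ _, hS3⟩, ⟨hS1, hAcard⟩, ⟨?_, hBcard⟩⟩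
        intro y hy
        exact mem_cN.2 (fun x hxS => (mem_cN.1 (hS2 hxS) y hy).symm)
      · intro x hx y hy h
        rw [Finset.mem_coe] at hx hy
        simp only [dif_pos hx, dif_pos hy, Sigma.mk.inj_iff, heq_eq_eq, Prod.mk.injEq] at h
        obtain ⟨-, h2, h3⟩ := h
        exact Sigma.ext h3 (heq_of_eq h2)
    refine hinj.trans ?_
    have : Q.card ≤ ((Finset.univ : Finset (Fin n)).powersetCard s).card *
        ((s.choose a) * ((t-1).choose b)) := by
      rw [hQ, Finset.card_sigma]
      refine Finset.sum_le_card_nsmul _ _ _ ?_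
      intro S hS
      simp only [Finset.mem_powersetCard] at hS
      rw [Finset.card_product, Finset.card_powersetCard, Finset.card_powersetCard, hS.2]
      exact Nat.mul_le_mul_left _ (Nat.choose_le_choose b (card_cN_le hfree hS.2))
    rw [Finset.card_powersetCard, Finset.card_univ, Fintype.card_fin] at this
    rw [Nat.mul_assoc]
    exact this

lemma copyCount_le (hfree : ¬ ContainsCopy (Kbip s t) G) (has : a < s) :
    _root_.copyCount (Kbip a b) G ≤
      (n.choose b) * ((s-1).choose a) + (n.choose s) * (s.choose a) * ((t-1).choose b) :=
  copyCount_le_pairSet.trans (pairSet_card_le.trans (sum_choose_le hfree has))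

lemma bot_free (hs : 0 < s) (ht : 0 < t) :
    ¬ ContainsCopy (Kbip s t) (⊥ : SimpleGraph (Fin n)) := by
  rintro ⟨f, -⟩
  exact f.map_rel (by simp : (Kbip s t).Adj (Sum.inl ⟨0, hs⟩) (Sum.inr ⟨0, ht⟩))

lemma exGen_bddAbove (has : a < s) :
    ∀ m ∈ {m | ∃ G : SimpleGraph (Fin n), ¬ ContainsCopy (Kbip s t) G ∧ m = _root_.copyCount (Kbip a b) G},
      m ≤ (n.choose b) * ((s-1).choose a) + (n.choose s) * (s.choose a) * ((t-1).choose b) := by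
  rintro m ⟨G, hG, rfl⟩
  exact copyCount_le hG has

lemma exGen_le (hs : 0 < s) (ht : 0 < t) (has : a < s) :
    exGen n (Kbip a b) (Kbip s t) ≤
      (n.choose b) * ((s-1).choose a) + (n.choose s) * (s.choose a) * ((t-1).choose b) :=
  csSup_le ⟨_, ⟨⊥, bot_free hs ht, rfl⟩⟩ (exGen_bddAbove has)

end Upper

section Lower
variable {n a b s t : ℕ}

/-- The extremal construction: a clique on the first `s-1` vertices joined to everything,
the rest independent. -/
noncomputable def lowG (n s : ℕ) : SimpleGraph (Fin n) :=
  SimpleGraph.fromRel (fun u _ => (u : Fin n).val < s - 1)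

lemma lowG_adj {u v : Fin n} :
    (lowG n s).Adj u v ↔ u ≠ v ∧ (u.val < s - 1 ∨ v.val < s - 1) := by
  rw [lowG, SimpleGraph.fromRel_adj]

/-- The "core" of the construction. -/
noncomputable def core (n s : ℕ) : Finset (Fin n) :=
  Finset.univ.filter (fun v => v.val < s - 1)

lemma mem_core {v : Fin n} : v ∈ core n s ↔ v.val < s - 1 := by simp [core]

lemma core_card_le : (core n s).card ≤ s - 1 := by
  have := Finset.card_le_card_of_injOn (fun v : Fin n => v.val)
    (s := core n s) (t := Finset.range (s-1))
    (fun v hv => Finset.mem_range.2 (mem_core.1 hv))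
    (fun v _ w _ h => Fin.val_injective h)
  simpa using this

lemma core_card_eq (hn : s - 1 ≤ n) : (core n s).card = s - 1 := by
  refine le_antisymm core_card_le ?_
  have := Finset.card_le_card_of_injOn (fun i : Fin (s-1) => Fin.castLE hn i)
    (s := Finset.univ) (t := core n s)
    (fun i _ => mem_core.2 i.2)
    (fun i _ j _ h => by exact Fin.castLE_injective hn h)
  simpa using this

lemma lowG_free (hs : 0 < s) (hst : s ≤ t) : ¬ ContainsCopy (Kbip s t) (lowG n s) := by
  rintro ⟨f, hf⟩
  by_cases hc : ∀ i : Fin s, f (Sum.inl i) ∈ core n s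
  · have hcard := Finset.card_le_card_of_injOn (fun i : Fin s => f (Sum.inl i))
      (s := Finset.univ) (t := core n s) (fun i _ => hc i)
      (fun i _ j _ h => by
        have := hf h; simpa using this)
    simp only [Finset.card_univ, Fintype.card_fin] at hcard
    have := core_card_le (n := n) (s := s)
    omega
  · push_neg at hc
    obtain ⟨i0, hi0⟩ := hc
    have hright : ∀ j : Fin t, f (Sum.inr j) ∈ core n s := by
      intro j
      have hadj : (lowG n s).Adj (f (Sum.inl i0)) (f (Sum.inr j)) :=
        f.map_rel (by simp : (Kbip s t).Adj (Sum.inl i0) (Sum.inr j))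
      rcases (lowG_adj.1 hadj).2 with h | h
      · exact absurd (mem_core.2 h) hi0
      · exact mem_core.2 h
    have hcard := Finset.card_le_card_of_injOn (fun j : Fin t => f (Sum.inr j))
      (s := Finset.univ) (t := core n s) (fun j _ => hright j)
      (fun i _ j _ h => by
        have := hf h; simpa using this)
    simp only [Finset.card_univ, Fintype.card_fin] at hcard
    have := core_card_le (n := n) (s := s)
    omega
end Lower

section Lower2
variable {n a b s t : ℕ}

noncomputable def pairSub (n s : ℕ) (A B : Finset (Fin n))
    (hA : A ⊆ core n s) (hB : B ⊆ (core n s)ᶜ) : (lowG n s).Subgraph where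
  verts := ↑A ∪ ↑B
  Adj x y := (x ∈ A ∧ y ∈ B) ∨ (x ∈ B ∧ y ∈ A)
  adj_sub := by
    rintro x y (⟨hx, hy⟩ | ⟨hx, hy⟩)
    · exact lowG_adj.2 ⟨fun hEq => (Finset.mem_compl.1 (hB hy)) (hEq ▸ hA hx),
        Or.inl (mem_core.1 (hA hx))⟩
    · exact lowG_adj.2 ⟨fun hEq => (Finset.mem_compl.1 (hB hx)) (by rw [hEq]; exact hA hy),
        Or.inr (mem_core.1 (hA hy))⟩
  edge_vert := by
    rintro x y (⟨hx, -⟩ | ⟨hx, -⟩)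
    · exact Or.inl hx
    · exact Or.inr hx
  symm := by
    constructor
    rintro x y (⟨hx, hy⟩ | ⟨hx, hy⟩)
    · exact Or.inr ⟨hy, hx⟩
    · exact Or.inl ⟨hy, hx⟩

lemma pairSub_disj {A B : Finset (Fin n)} (hA : A ⊆ core n s) (hB : B ⊆ (core n s)ᶜ) :
    Disjoint (↑A : Set (Fin n)) ↑B := by
  rw [Set.disjoint_left]
  intro x hx hxB
  exact Finset.mem_compl.1 (hB hxB) (hA hx)

lemma pairSub_iso {A B : Finset (Fin n)} (hA : A ⊆ core n s) (hB : B ⊆ (core n s)ᶜ)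
    (hAcard : A.card = a) (hBcard : B.card = b) :
    Nonempty (Kbip a b ≃g (pairSub n s A B hA hB).coe) := by
  classical
  have disj := pairSub_disj hA hB
  let eA : Fin a ≃ {x // x ∈ A} := (Finset.equivFinOfCardEq hAcard).symm
  let eB : Fin b ≃ {x // x ∈ B} := (Finset.equivFinOfCardEq hBcard).symm
  let e : (Fin a ⊕ Fin b) ≃ ↥(↑A ∪ ↑B : Set (Fin n)) :=
    (Equiv.sumCongr eA eB).trans (Equiv.Set.union disj).symm
  have hl : ∀ i : Fin a, (↑(e (Sum.inl i)) : Fin n) ∈ A := by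
    intro i
    simp only [e, Equiv.trans_apply, Equiv.sumCongr_apply, Sum.map_inl,
      Equiv.Set.union_symm_apply_left]
    exact (eA i).2
  have hr : ∀ j : Fin b, (↑(e (Sum.inr j)) : Fin n) ∈ B := by
    intro j
    simp only [e, Equiv.trans_apply, Equiv.sumCongr_apply, Sum.map_inr,
      Equiv.Set.union_symm_apply_right]
    exact (eB j).2
  have hAnB : ∀ x : Fin n, x ∈ A → x ∉ B := fun x hx hxB =>
    Finset.mem_compl.1 (hB hxB) (hA hx)
  have hBnA : ∀ x : Fin n, x ∈ B → x ∉ A := fun x hx hxA => hAnB x hxA hx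
  refine ⟨⟨e, ?_⟩⟩
  rintro (i | i) (j | j)
  · constructor
    · rintro (⟨h1, h2⟩ | ⟨h1, h2⟩)
      · exact absurd h2 (hAnB _ (hl j))
      · exact absurd h1 (hAnB _ (hl i))
    · intro h; simp at h
  · constructor
    · intro h; simp
    · intro h; exact Or.inl ⟨hl i, hr j⟩
  · constructor
    · intro h; simp
    · intro h; exact Or.inr ⟨hr i, hl j⟩
  · constructor
    · rintro (⟨h1, h2⟩ | ⟨h1, h2⟩)
      · exact absurd h1 (hBnA _ (hr i))
      · exact absurd h2 (hBnA _ (hr j))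
    · intro h; simp at h

lemma pairSub_inj {A1 B1 A2 B2 : Finset (Fin n)}
    (hA1 : A1 ⊆ core n s) (hB1 : B1 ⊆ (core n s)ᶜ)
    (hA2 : A2 ⊆ core n s) (hB2 : B2 ⊆ (core n s)ᶜ)
    (h : pairSub n s A1 B1 hA1 hB1 = pairSub n s A2 B2 hA2 hB2) : A1 = A2 ∧ B1 = B2 := by
  have hverts : (↑A1 ∪ ↑B1 : Set (Fin n)) = ↑A2 ∪ ↑B2 := congrArg SimpleGraph.Subgraph.verts h
  constructor
  · ext x
    constructor
    · intro hx
      have : x ∈ (↑A2 ∪ ↑B2 : Set (Fin n)) := hverts ▸ Or.inl (Finset.mem_coe.2 hx)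
      rcases this with h2 | h2
      · exact Finset.mem_coe.1 h2
      · exact absurd (hA1 hx) (Finset.mem_compl.1 (hB2 (Finset.mem_coe.1 h2)))
    · intro hx
      have : x ∈ (↑A1 ∪ ↑B1 : Set (Fin n)) := hverts ▸ Or.inl (Finset.mem_coe.2 hx)
      rcases this with h2 | h2
      · exact Finset.mem_coe.1 h2
      · exact absurd (hA2 hx) (Finset.mem_compl.1 (hB1 (Finset.mem_coe.1 h2)))
  · ext x
    constructor
    · intro hx
      have : x ∈ (↑A2 ∪ ↑B2 : Set (Fin n)) := hverts ▸ Or.inr (Finset.mem_coe.2 hx)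
      rcases this with h2 | h2
      · exact absurd (hA2 (Finset.mem_coe.1 h2)) (Finset.mem_compl.1 (hB1 hx))
      · exact Finset.mem_coe.1 h2
    · intro hx
      have : x ∈ (↑A1 ∪ ↑B1 : Set (Fin n)) := hverts ▸ Or.inr (Finset.mem_coe.2 hx)
      rcases this with h2 | h2
      · exact absurd (hA1 (Finset.mem_coe.1 h2)) (Finset.mem_compl.1 (hB2 hx))
      · exact Finset.mem_coe.1 h2

lemma lowG_count (hn : s - 1 ≤ n) :
    ((s-1).choose a) * ((n - (s-1)).choose b) ≤ _root_.copyCount (Kbip a b) (lowG n s) := by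
  classical
  set pairs := ((core n s).powersetCard a) ×ˢ (((core n s)ᶜ).powersetCard b) with hpairs
  have hmem : ∀ p : Finset (Fin n) × Finset (Fin n), p ∈ pairs →
      (p.1 ⊆ core n s ∧ p.1.card = a) ∧ (p.2 ⊆ (core n s)ᶜ ∧ p.2.card = b) := by
    intro p hp
    simp only [hpairs, Finset.mem_product, Finset.mem_powersetCard] at hp
    exact hp
  have hcard : pairs.card = ((s-1).choose a) * ((n - (s-1)).choose b) := by
    rw [hpairs, Finset.card_product, Finset.card_powersetCard, Finset.card_powersetCard,
      core_card_eq hn, Finset.card_compl, core_card_eq hn, Fintype.card_fin]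
  rw [← hcard, _root_.copyCount]
  have hnatcard : Nat.card {p : Finset (Fin n) × Finset (Fin n) // p ∈ pairs} = pairs.card := by
    simp [Nat.card_eq_fintype_card, Fintype.card_coe]
  rw [← hnatcard]
  refine Nat.card_le_card_of_injective
    (fun p => ⟨pairSub n s p.1.1 p.1.2 (hmem _ p.2).1.1 (hmem _ p.2).2.1,
      pairSub_iso _ _ (hmem _ p.2).1.2 (hmem _ p.2).2.2⟩) ?_
  intro p q hEq
  simp only [Subtype.mk.injEq] at hEq
  obtain ⟨h1, h2⟩ := pairSub_inj _ _ _ _ hEq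
  exact Subtype.ext (Prod.ext h1 h2)

end Lower2

section Asymptotics

lemma choose_le_pow_real (n k : ℕ) : ((n.choose k : ℕ) : ℝ) ≤ (n:ℝ)^k := by
  have := Nat.choose_le_pow n k
  exact_mod_cast this

lemma choose_ge_aux {n k c : ℕ} (hkn : c + k ≤ n) :
    ((n:ℝ) - c - k)^k ≤ ((n-c).choose k : ℝ) * (k.factorial) := by
  have hcn : c ≤ n := by omega
  have h : (0:ℝ) ≤ (n:ℝ) - c - k := by
    have : ((c + k : ℕ) : ℝ) ≤ n := by exact_mod_cast hkn
    push_cast at this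
    linarith
  have h1 : ((n-c)+1-k)^k ≤ (n-c).descFactorial k := Nat.pow_sub_le_descFactorial (n-c) k
  have h2 : (n-c).descFactorial k = k.factorial * (n-c).choose k :=
    Nat.descFactorial_eq_factorial_mul_choose _ _
  have h3 : ((n:ℝ) - c - k) ≤ (((n-c)+1-k : ℕ) : ℝ) := by
    rw [Nat.cast_sub (by omega)]
    push_cast [Nat.cast_sub hcn]
    linarith
  calc ((n:ℝ) - c - k)^k ≤ (((n-c)+1-k : ℕ) : ℝ)^k := by
        exact pow_le_pow_left₀ h h3 k
    _ = ((((n-c)+1-k)^k : ℕ) : ℝ) := by push_cast; ring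
    _ ≤ (((n-c).descFactorial k : ℕ) : ℝ) := by exact_mod_cast h1
    _ = _ := by rw [h2]; push_cast; ring

lemma choose_mul_fact_le (n k : ℕ) : ((n.choose k : ℕ) : ℝ) * (k.factorial) ≤ (n:ℝ)^k := by
  have h1 : n.descFactorial k ≤ n^k := Nat.descFactorial_le_pow n k
  have h2 : n.descFactorial k = k.factorial * n.choose k :=
    Nat.descFactorial_eq_factorial_mul_choose _ _
  rw [h2] at h1
  exact_mod_cast (by rw [Nat.mul_comm] at h1; exact h1)

lemma L1 {s b : ℕ} (K : ℕ) (hsb : s < b) (hb : 0 < b) {ε : ℝ} (hε : 0 < ε) :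
    ∃ n₀ : ℕ, ∀ n ≥ n₀, (K : ℝ) * (n.choose s) ≤ ε * (n.choose b) := by
  set M : ℝ := K * (2:ℝ)^b * b.factorial with hM
  have hM0 : 0 ≤ M := by positivity
  refine ⟨max (2*b) (⌈M/ε⌉₊ + 1), fun n hn => ?_⟩
  have hn1 : 2*b ≤ n := le_trans (le_max_left _ _) hn
  have hn2 : M/ε < n := by
    have h : ((⌈M/ε⌉₊ + 1 : ℕ) : ℝ) ≤ n := by exact_mod_cast le_trans (le_max_right _ _) hn
    push_cast at h
    have := Nat.le_ceil (M/ε)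
    linarith
  have hn0 : (1:ℝ) ≤ n := by
    have : (2*b : ℕ) ≤ n := hn1
    have : ((2*b:ℕ):ℝ) ≤ n := by exact_mod_cast this
    push_cast at this
    have hb' : (1:ℝ) ≤ b := by exact_mod_cast hb
    linarith
  have hMn : M ≤ ε * n := by
    rw [div_lt_iff₀ hε] at hn2
    nlinarith
  -- (n/2)^b ≤ choose * b!
  have e2 : ((n:ℝ) - 0 - b)^b ≤ (n.choose b : ℝ) * b.factorial := by
    have := choose_ge_aux (n := n) (k := b) (c := 0) (by omega)
    simpa using this
  have hhalf : (n:ℝ)/2 ≤ (n:ℝ) - 0 - b := by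
    have : ((2*b:ℕ):ℝ) ≤ n := by exact_mod_cast hn1
    push_cast at this
    linarith
  have e2' : ((n:ℝ)/2)^b ≤ (n.choose b : ℝ) * b.factorial :=
    le_trans (pow_le_pow_left₀ (by positivity) hhalf b) e2
  have e1 : (K:ℝ) * (n.choose s) ≤ (K:ℝ) * (n:ℝ)^s :=
    mul_le_mul_of_nonneg_left (choose_le_pow_real n s) (by positivity)
  refine le_trans e1 ?_
  -- suffices K * n^s ≤ ε * (n/2)^b / b! ≤ ε * choose b
  have key : (K:ℝ) * (n:ℝ)^s ≤ ε * (((n:ℝ)/2)^b / b.factorial) := by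
    rw [← mul_div_assoc, le_div_iff₀ (by positivity : (0:ℝ) < (b.factorial : ℝ))]
    have hpow : (n:ℝ)^(s+1) ≤ (n:ℝ)^b := pow_le_pow_right₀ hn0 (by omega)
    have hps : (0:ℝ) ≤ (n:ℝ)^s := by positivity
    have expand : ((n:ℝ)/2)^b = (n:ℝ)^b / 2^b := div_pow _ _ _
    rw [expand]
    have : M * (n:ℝ)^s ≤ ε * (n:ℝ)^b := by
      calc M * (n:ℝ)^s ≤ (ε * n) * (n:ℝ)^s := mul_le_mul_of_nonneg_right hMn hps
        _ = ε * (n:ℝ)^(s+1) := by ring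
        _ ≤ ε * (n:ℝ)^b := mul_le_mul_of_nonneg_left hpow hε.le
    rw [hM] at this
    have h2b : (0:ℝ) < (2:ℝ)^b := by positivity
    rw [← mul_div_assoc, le_div_iff₀ h2b]
    linear_combination this
  refine le_trans key ?_
  have : ((n:ℝ)/2)^b / b.factorial ≤ (n.choose b : ℝ) := by
    rw [div_le_iff₀ (by positivity : (0:ℝ) < (b.factorial : ℝ))]
    exact e2'
  exact mul_le_mul_of_nonneg_left this hε.le

lemma L2 (c b : ℕ) {ε : ℝ} (hε : 0 < ε) :
    ∃ n₀ : ℕ, ∀ n ≥ n₀, (1-ε) * (n.choose b) ≤ ((n-c).choose b : ℝ) := by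
  rcases le_or_gt (1-ε) 0 with h | h
  · exact ⟨0, fun n _ => le_trans (mul_nonpos_of_nonpos_of_nonneg h (by positivity)) (by positivity)⟩
  set m := c + b with hm
  refine ⟨max (m+1) (⌈(b*m : ℝ)/ε⌉₊ + 1), fun n hn => ?_⟩
  have hn1 : m + 1 ≤ n := le_trans (le_max_left _ _) hn
  have hnpos : (0:ℝ) < n := by
    have : (0:ℕ) < n := by omega
    exact_mod_cast this
  have hn2 : (b*m : ℝ)/ε < n := by
    have hh : ((⌈(b*m:ℝ)/ε⌉₊ + 1 : ℕ) : ℝ) ≤ n := by exact_mod_cast le_trans (le_max_right _ _) hn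
    push_cast at hh
    have := Nat.le_ceil ((b*m:ℝ)/ε)
    linarith
  have hmn : (m:ℝ) ≤ n := by
    have : (m:ℕ) ≤ n := by omega
    exact_mod_cast this
  have hbm : (b:ℝ) * m ≤ ε * n := by
    rw [div_lt_iff₀ hε] at hn2
    nlinarith
  -- Bernoulli
  have hx : (-2:ℝ) ≤ -((m:ℝ)/n) := by
    have : (m:ℝ)/n ≤ 1 := by
      rw [div_le_one hnpos]; exact hmn
    linarith
  have bern : 1 + (b:ℝ) * (-((m:ℝ)/n)) ≤ (1 + (-((m:ℝ)/n)))^b := one_add_mul_le_pow hx b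
  have key1 : (1-ε) ≤ (1 - (m:ℝ)/n)^b := by
    have h1 : (1-ε) ≤ 1 - (b:ℝ)*m/n := by
      rw [sub_le_sub_iff_left, div_le_iff₀ hnpos]
      nlinarith
    calc (1-ε) ≤ 1 - (b:ℝ)*m/n := h1
      _ = 1 + (b:ℝ) * (-((m:ℝ)/n)) := by ring
      _ ≤ (1 + (-((m:ℝ)/n)))^b := bern
      _ = (1 - (m:ℝ)/n)^b := by ring_nf
  have key2 : (1 - (m:ℝ)/n)^b * (n:ℝ)^b = ((n:ℝ) - m)^b := by
    rw [← mul_pow]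
    congr 1
    field_simp
  -- chain
  have up : (n.choose b : ℝ) * b.factorial ≤ (n:ℝ)^b := choose_mul_fact_le n b
  have lo : ((n:ℝ) - c - b)^b ≤ ((n-c).choose b : ℝ) * b.factorial :=
    choose_ge_aux (by omega)
  have hfact : (0:ℝ) < b.factorial := by positivity
  rw [← mul_le_mul_iff_of_pos_right hfact]
  calc (1-ε) * (n.choose b : ℝ) * b.factorial ≤ (1-ε) * (n:ℝ)^b := by
        rw [mul_assoc]
        exact mul_le_mul_of_nonneg_left up h.le
    _ ≤ (1 - (m:ℝ)/n)^b * (n:ℝ)^b := mul_le_mul_of_nonneg_right key1 (by positivity)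
    _ = ((n:ℝ) - m)^b := key2
    _ = ((n:ℝ) - c - b)^b := by rw [hm]; push_cast; ring_nf
    _ ≤ ((n-c).choose b : ℝ) * b.factorial := lo

end Asymptotics



end Aux

/-- if `a < s ≤ t` and (`s < b` or `s = b = t`), then
`ex(n, K_{a,b}, K_{s,t}) = (1+o(1))·C(s-1,a)·C(n,b)`. -/
theorem stmt1 (a b s t : ℕ) (ha : 0 < a) (hb : 0 < b) (hs : 0 < s) (ht : 0 < t)
    (has : a < s) (hst : s ≤ t) (hcase : s < b ∨ (s = b ∧ b = t))
    (ε : ℝ) (hε : 0 < ε) :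
    ∃ n₀ : ℕ, ∀ n ≥ n₀,
      (1 - ε) * (Nat.choose (s - 1) a) * (Nat.choose n b) ≤
        (exGen n (Kbip a b) (Kbip s t) : ℝ) ∧
      (exGen n (Kbip a b) (Kbip s t) : ℝ) ≤
        (1 + ε) * (Nat.choose (s - 1) a) * (Nat.choose n b) := by

  set K : ℕ := (s.choose a) * ((t-1).choose b) with hK
  have hc1 : 0 < (s-1).choose a := Nat.choose_pos (by omega)
  have hc1R : (1:ℝ) ≤ ((s-1).choose a : ℝ) := by exact_mod_cast hc1
  -- upper asymptotic ingredient
  have hUp : ∃ n₁ : ℕ, ∀ n ≥ n₁, (K : ℝ) * (n.choose s) ≤ ε * (n.choose b) := by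
    rcases hcase with hsb | ⟨hsb, hbt⟩
    · exact L1 K hsb hb hε
    · refine ⟨0, fun n _ => ?_⟩
      have : (t-1).choose b = 0 := Nat.choose_eq_zero_of_lt (by omega)
      rw [hK, this, Nat.mul_zero]
      simp only [Nat.cast_zero, zero_mul]
      positivity
  obtain ⟨n₁, hn₁⟩ := hUp
  obtain ⟨n₂, hn₂⟩ := L2 (s-1) b hε
  refine ⟨max (max n₁ n₂) s, fun n hn => ?_⟩
  have hns : s ≤ n := le_trans (le_max_right _ _) hn
  have hnn₁ : n₁ ≤ n := le_trans (le_trans (le_max_left _ _) (le_max_left _ _)) hn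
  have hnn₂ : n₂ ≤ n := le_trans (le_trans (le_max_right _ _) (le_max_left _ _)) hn
  constructor
  · -- lower bound
    have hlow : ((s-1).choose a) * ((n - (s-1)).choose b) ≤ exGen n (Kbip a b) (Kbip s t) :=
      le_trans (lowG_count (by omega))
        (le_csSup ⟨_, exGen_bddAbove has⟩ ⟨lowG n s, lowG_free hs hst, rfl⟩)
    have hlowR : (((s-1).choose a : ℝ)) * (((n - (s-1)).choose b : ℝ)) ≤
        (exGen n (Kbip a b) (Kbip s t) : ℝ) := by exact_mod_cast hlow
    refine le_trans ?_ hlowR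
    have := hn₂ n hnn₂
    calc (1 - ε) * ((s-1).choose a : ℝ) * (n.choose b : ℝ)
        = ((s-1).choose a : ℝ) * ((1 - ε) * (n.choose b : ℝ)) := by ring
      _ ≤ ((s-1).choose a : ℝ) * (((n - (s-1)).choose b : ℝ)) :=
          mul_le_mul_of_nonneg_left this (by positivity)
  · -- upper bound
    have hup : exGen n (Kbip a b) (Kbip s t) ≤
        (n.choose b) * ((s-1).choose a) + (n.choose s) * K := by
      have := exGen_le (n := n) (b := b) hs ht has
      rw [hK, ← Nat.mul_assoc]
      exact this
    have hupR : (exGen n (Kbip a b) (Kbip s t) : ℝ) ≤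
        (n.choose b : ℝ) * ((s-1).choose a : ℝ) + (n.choose s : ℝ) * K := by
      exact_mod_cast hup
    refine le_trans hupR ?_
    have h1 := hn₁ n hnn₁
    have h2 : ε * ((n.choose b : ℝ)) ≤ ε * ((s-1).choose a : ℝ) * (n.choose b : ℝ) := by
      have := mul_le_mul_of_nonneg_right (mul_le_mul_of_nonneg_left hc1R hε.le)
        (Nat.cast_nonneg (α := ℝ) (n.choose b))
      simpa using this
    nlinarith [h1, h2]
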